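/- Over the rationals, with L = 4 and R_l the 4×4 cyclic rotation matrices, the 12×12 block matrix [[I, I, I],[I, 2R_1, 3R_3],[I, 4R_2, 9R_1]] is invertible. -/

import Mathlib

set_option maxHeartbeats 4000000


/-- Cyclic rotation matrix over ℚ, size 4. -/
def rot4 (l : ℕ) : Matrix (Fin 4) (Fin 4) ℚ :=
  Matrix.of fun i j => if (j : ℕ) = ((i : ℕ) + l) % 4 then 1 else 0

/-- 3×3 block matrix of 4×4 blocks. -/
def blk3 (B : Fin 3 → Fin 3 → Matrix (Fin 4) (Fin 4) ℚ) :
    Matrix (Fin 3 × Fin 4) (Fin 3 × Fin 4) ℚ :=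
  Matrix.of fun p q => B p.1 q.1 p.2 q.2

def invB : Matrix (Fin 3 × Fin 4) (Fin 3 × Fin 4) ℚ :=
  blk3 ![![!![(5009/4060), (1963/4060), (2531/4060), (2677/4060);
      (2677/4060), (5009/4060), (1963/4060), (2531/4060);
      (2531/4060), (2677/4060), (5009/4060), (1963/4060);
      (1963/4060), (2531/4060), (2677/4060), (5009/4060)],
    !![(-9959/24360), (-16123/24360), (-16721/24360), (-18097/24360);
      (-18097/24360), (-9959/24360), (-16123/24360), (-16721/24360);
      (-16721/24360), (-18097/24360), (-9959/24360), (-16123/24360);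
      (-16123/24360), (-16721/24360), (-18097/24360), (-9959/24360)],
    !![(853/4872), (869/4872), (307/4872), (407/4872);
      (407/4872), (853/4872), (869/4872), (307/4872);
      (307/4872), (407/4872), (853/4872), (869/4872);
      (869/4872), (307/4872), (407/4872), (853/4872)]],
  ![!![(-1177/2030), (-682/1015), (-1723/2030), (-913/1015);
      (-913/1015), (-1177/2030), (-682/1015), (-1723/2030);
      (-1723/2030), (-913/1015), (-1177/2030), (-682/1015);
      (-682/1015), (-1723/2030), (-913/1015), (-1177/2030)],
    !![(5171/6090), (11729/12180), (3142/3045), (14081/12180);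
      (14081/12180), (5171/6090), (11729/12180), (3142/3045);
      (3142/3045), (14081/12180), (5171/6090), (11729/12180);
      (11729/12180), (3142/3045), (14081/12180), (5171/6090)],
    !![(-164/609), (-709/2436), (-223/1218), (-625/2436);
      (-625/2436), (-164/609), (-709/2436), (-223/1218);
      (-223/1218), (-625/2436), (-164/609), (-709/2436);
      (-709/2436), (-223/1218), (-625/2436), (-164/609)]],
  ![!![(281/812), (153/812), (183/812), (195/812);
      (195/812), (281/812), (153/812), (183/812);
      (183/812), (195/812), (281/812), (153/812);
      (153/812), (183/812), (195/812), (281/812)],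
    !![(-715/1624), (-489/1624), (-561/1624), (-671/1624);
      (-671/1624), (-715/1624), (-489/1624), (-561/1624);
      (-561/1624), (-671/1624), (-715/1624), (-489/1624);
      (-489/1624), (-561/1624), (-671/1624), (-715/1624)],
    !![(153/1624), (183/1624), (195/1624), (281/1624);
      (281/1624), (153/1624), (183/1624), (195/1624);
      (195/1624), (281/1624), (153/1624), (183/1624);
      (183/1624), (195/1624), (281/1624), (153/1624)]]]

lemma fv0 : ((0 : Fin 4) : ℕ) = 0 := rfl
lemma fv1 : ((1 : Fin 4) : ℕ) = 1 := rfl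
lemma fv2 : ((2 : Fin 4) : ℕ) = 2 := rfl
lemma fv3 : ((3 : Fin 4) : ℕ) = 3 := rfl

lemma hblk00 : ∀ i j : Fin 4,
    (blk3 ![![1, 1, 1], ![1, 2 • rot4 1, 3 • rot4 3], ![1, 4 • rot4 2, 9 • rot4 1]] * invB) (0, i) (0, j)
      = (1 : Matrix (Fin 3 × Fin 4) (Fin 3 × Fin 4) ℚ) (0, i) (0, j) := by
  intro i j
  fin_cases i <;> fin_cases j <;>
    · simp only [Matrix.mul_apply, blk3, invB, rot4, Matrix.one_apply, Fintype.sum_prod_type,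
        Fin.sum_univ_three, Fin.sum_univ_four, Fin.isValue, Matrix.of_apply, Matrix.smul_apply,
        Matrix.cons_val', Matrix.cons_val_zero, Matrix.cons_val_one, Matrix.head_cons,
        Matrix.head_fin_const, Matrix.empty_val', Matrix.cons_val_fin_one, Matrix.cons_val_two,
        Matrix.cons_val_three, Matrix.vecTail, Matrix.vecHead, Function.comp,
        Prod.mk.injEq, Fin.mk.injEq]
      norm_num [nsmul_eq_mul, fv0, fv1, fv2, fv3, Fin.ext_iff, Matrix.one_apply, Matrix.cons_val]
      all_goals (simp only [Matrix.cons_val_two, Matrix.cons_val_three, Matrix.vecHead, Matrix.vecTail, Function.comp, Fin.succ]; norm_num)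

lemma hblk01 : ∀ i j : Fin 4,
    (blk3 ![![1, 1, 1], ![1, 2 • rot4 1, 3 • rot4 3], ![1, 4 • rot4 2, 9 • rot4 1]] * invB) (0, i) (1, j)
      = (1 : Matrix (Fin 3 × Fin 4) (Fin 3 × Fin 4) ℚ) (0, i) (1, j) := by
  intro i j
  fin_cases i <;> fin_cases j <;>
    · simp only [Matrix.mul_apply, blk3, invB, rot4, Matrix.one_apply, Fintype.sum_prod_type,
        Fin.sum_univ_three, Fin.sum_univ_four, Fin.isValue, Matrix.of_apply, Matrix.smul_apply,
        Matrix.cons_val', Matrix.cons_val_zero, Matrix.cons_val_one, Matrix.head_cons,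
        Matrix.head_fin_const, Matrix.empty_val', Matrix.cons_val_fin_one, Matrix.cons_val_two,
        Matrix.cons_val_three, Matrix.vecTail, Matrix.vecHead, Function.comp,
        Prod.mk.injEq, Fin.mk.injEq]
      norm_num [nsmul_eq_mul, fv0, fv1, fv2, fv3, Fin.ext_iff, Matrix.one_apply, Matrix.cons_val]
      all_goals (simp only [Matrix.cons_val_two, Matrix.cons_val_three, Matrix.vecHead, Matrix.vecTail, Function.comp, Fin.succ]; norm_num)

lemma hblk02 : ∀ i j : Fin 4,
    (blk3 ![![1, 1, 1], ![1, 2 • rot4 1, 3 • rot4 3], ![1, 4 • rot4 2, 9 • rot4 1]] * invB) (0, i) (2, j)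
      = (1 : Matrix (Fin 3 × Fin 4) (Fin 3 × Fin 4) ℚ) (0, i) (2, j) := by
  intro i j
  fin_cases i <;> fin_cases j <;>
    · simp only [Matrix.mul_apply, blk3, invB, rot4, Matrix.one_apply, Fintype.sum_prod_type,
        Fin.sum_univ_three, Fin.sum_univ_four, Fin.isValue, Matrix.of_apply, Matrix.smul_apply,
        Matrix.cons_val', Matrix.cons_val_zero, Matrix.cons_val_one, Matrix.head_cons,
        Matrix.head_fin_const, Matrix.empty_val', Matrix.cons_val_fin_one, Matrix.cons_val_two,
        Matrix.cons_val_three, Matrix.vecTail, Matrix.vecHead, Function.comp,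
        Prod.mk.injEq, Fin.mk.injEq]
      norm_num [nsmul_eq_mul, fv0, fv1, fv2, fv3, Fin.ext_iff, Matrix.one_apply, Matrix.cons_val]
      all_goals (simp only [Matrix.cons_val_two, Matrix.cons_val_three, Matrix.vecHead, Matrix.vecTail, Function.comp, Fin.succ]; norm_num)

lemma hblk10 : ∀ i j : Fin 4,
    (blk3 ![![1, 1, 1], ![1, 2 • rot4 1, 3 • rot4 3], ![1, 4 • rot4 2, 9 • rot4 1]] * invB) (1, i) (0, j)
      = (1 : Matrix (Fin 3 × Fin 4) (Fin 3 × Fin 4) ℚ) (1, i) (0, j) := by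
  intro i j
  fin_cases i <;> fin_cases j <;>
    · simp only [Matrix.mul_apply, blk3, invB, rot4, Matrix.one_apply, Fintype.sum_prod_type,
        Fin.sum_univ_three, Fin.sum_univ_four, Fin.isValue, Matrix.of_apply, Matrix.smul_apply,
        Matrix.cons_val', Matrix.cons_val_zero, Matrix.cons_val_one, Matrix.head_cons,
        Matrix.head_fin_const, Matrix.empty_val', Matrix.cons_val_fin_one, Matrix.cons_val_two,
        Matrix.cons_val_three, Matrix.vecTail, Matrix.vecHead, Function.comp,
        Prod.mk.injEq, Fin.mk.injEq]
      simp [Matrix.vecHead, Matrix.vecTail, nsmul_eq_mul, Matrix.one_apply]; norm_num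

lemma hblk11 : ∀ i j : Fin 4,
    (blk3 ![![1, 1, 1], ![1, 2 • rot4 1, 3 • rot4 3], ![1, 4 • rot4 2, 9 • rot4 1]] * invB) (1, i) (1, j)
      = (1 : Matrix (Fin 3 × Fin 4) (Fin 3 × Fin 4) ℚ) (1, i) (1, j) := by
  intro i j
  fin_cases i <;> fin_cases j <;>
    · simp only [Matrix.mul_apply, blk3, invB, rot4, Matrix.one_apply, Fintype.sum_prod_type,
        Fin.sum_univ_three, Fin.sum_univ_four, Fin.isValue, Matrix.of_apply, Matrix.smul_apply,
        Matrix.cons_val', Matrix.cons_val_zero, Matrix.cons_val_one, Matrix.head_cons,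
        Matrix.head_fin_const, Matrix.empty_val', Matrix.cons_val_fin_one, Matrix.cons_val_two,
        Matrix.cons_val_three, Matrix.vecTail, Matrix.vecHead, Function.comp,
        Prod.mk.injEq, Fin.mk.injEq]
      simp [Matrix.vecHead, Matrix.vecTail, nsmul_eq_mul, Matrix.one_apply]; norm_num

lemma hblk12 : ∀ i j : Fin 4,
    (blk3 ![![1, 1, 1], ![1, 2 • rot4 1, 3 • rot4 3], ![1, 4 • rot4 2, 9 • rot4 1]] * invB) (1, i) (2, j)
      = (1 : Matrix (Fin 3 × Fin 4) (Fin 3 × Fin 4) ℚ) (1, i) (2, j) := by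
  intro i j
  fin_cases i <;> fin_cases j <;>
    · simp only [Matrix.mul_apply, blk3, invB, rot4, Matrix.one_apply, Fintype.sum_prod_type,
        Fin.sum_univ_three, Fin.sum_univ_four, Fin.isValue, Matrix.of_apply, Matrix.smul_apply,
        Matrix.cons_val', Matrix.cons_val_zero, Matrix.cons_val_one, Matrix.head_cons,
        Matrix.head_fin_const, Matrix.empty_val', Matrix.cons_val_fin_one, Matrix.cons_val_two,
        Matrix.cons_val_three, Matrix.vecTail, Matrix.vecHead, Function.comp,
        Prod.mk.injEq, Fin.mk.injEq]
      simp [Matrix.vecHead, Matrix.vecTail, nsmul_eq_mul, Matrix.one_apply]; norm_num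

lemma hblk20 : ∀ i j : Fin 4,
    (blk3 ![![1, 1, 1], ![1, 2 • rot4 1, 3 • rot4 3], ![1, 4 • rot4 2, 9 • rot4 1]] * invB) (2, i) (0, j)
      = (1 : Matrix (Fin 3 × Fin 4) (Fin 3 × Fin 4) ℚ) (2, i) (0, j) := by
  intro i j
  fin_cases i <;> fin_cases j <;>
    · simp only [Matrix.mul_apply, blk3, invB, rot4, Matrix.one_apply, Fintype.sum_prod_type,
        Fin.sum_univ_three, Fin.sum_univ_four, Fin.isValue, Matrix.of_apply, Matrix.smul_apply,
        Matrix.cons_val', Matrix.cons_val_zero, Matrix.cons_val_one, Matrix.head_cons,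
        Matrix.head_fin_const, Matrix.empty_val', Matrix.cons_val_fin_one, Matrix.cons_val_two,
        Matrix.cons_val_three, Matrix.vecTail, Matrix.vecHead, Function.comp,
        Prod.mk.injEq, Fin.mk.injEq]
      simp [Matrix.vecHead, Matrix.vecTail, nsmul_eq_mul, Matrix.one_apply]; norm_num

lemma hblk21 : ∀ i j : Fin 4,
    (blk3 ![![1, 1, 1], ![1, 2 • rot4 1, 3 • rot4 3], ![1, 4 • rot4 2, 9 • rot4 1]] * invB) (2, i) (1, j)
      = (1 : Matrix (Fin 3 × Fin 4) (Fin 3 × Fin 4) ℚ) (2, i) (1, j) := by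
  intro i j
  fin_cases i <;> fin_cases j <;>
    · simp only [Matrix.mul_apply, blk3, invB, rot4, Matrix.one_apply, Fintype.sum_prod_type,
        Fin.sum_univ_three, Fin.sum_univ_four, Fin.isValue, Matrix.of_apply, Matrix.smul_apply,
        Matrix.cons_val', Matrix.cons_val_zero, Matrix.cons_val_one, Matrix.head_cons,
        Matrix.head_fin_const, Matrix.empty_val', Matrix.cons_val_fin_one, Matrix.cons_val_two,
        Matrix.cons_val_three, Matrix.vecTail, Matrix.vecHead, Function.comp,
        Prod.mk.injEq, Fin.mk.injEq]
      simp [Matrix.vecHead, Matrix.vecTail, nsmul_eq_mul, Matrix.one_apply]; norm_num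

lemma hblk22 : ∀ i j : Fin 4,
    (blk3 ![![1, 1, 1], ![1, 2 • rot4 1, 3 • rot4 3], ![1, 4 • rot4 2, 9 • rot4 1]] * invB) (2, i) (2, j)
      = (1 : Matrix (Fin 3 × Fin 4) (Fin 3 × Fin 4) ℚ) (2, i) (2, j) := by
  intro i j
  fin_cases i <;> fin_cases j <;>
    · simp only [Matrix.mul_apply, blk3, invB, rot4, Matrix.one_apply, Fintype.sum_prod_type,
        Fin.sum_univ_three, Fin.sum_univ_four, Fin.isValue, Matrix.of_apply, Matrix.smul_apply,
        Matrix.cons_val', Matrix.cons_val_zero, Matrix.cons_val_one, Matrix.head_cons,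
        Matrix.head_fin_const, Matrix.empty_val', Matrix.cons_val_fin_one, Matrix.cons_val_two,
        Matrix.cons_val_three, Matrix.vecTail, Matrix.vecHead, Function.comp,
        Prod.mk.injEq, Fin.mk.injEq]
      simp [Matrix.vecHead, Matrix.vecTail, nsmul_eq_mul, Matrix.one_apply]; norm_num

theorem case4_invertible :
    IsUnit (blk3 ![![1, 1, 1], ![1, 2 • rot4 1, 3 • rot4 3], ![1, 4 • rot4 2, 9 • rot4 1]]) := by
  have h : blk3 ![![1, 1, 1], ![1, 2 • rot4 1, 3 • rot4 3], ![1, 4 • rot4 2, 9 • rot4 1]] * invB = 1 := by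
    ext ⟨p, i⟩ ⟨q, j⟩
    fin_cases p <;> fin_cases q
    · exact hblk00 i j
    · exact hblk01 i j
    · exact hblk02 i j
    · exact hblk10 i j
    · exact hblk11 i j
    · exact hblk12 i j
    · exact hblk20 i j
    · exact hblk21 i j
    · exact hblk22 i j
  exact @isUnit_of_invertible _ _ _ (invertibleOfRightInverse _ _ h)
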